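/- Let V be a maximal isotropic subspace with respect to ω, and let ψ₀ be a stabilizer state for V. Then for every (c,d) : (Fin p → ZMod 2) × (Fin p → ZMod 2), the inner product ⟪ψ₀, σ(c,d).mulVec ψ₀⟫ = ∑ x, conj(ψ₀ x) * (σ(c,d).mulVec ψ₀) x equals 0 if and only if (c,d) ∉ V. (Paper's Lemma 4: the state Sψ₀ is orthogonal to the stabilizer state ψ₀ iff the spinor S lies outside the Cartanion.) -/

import Mathlib

open Matrix BigOperators

/-- The mod-2 dot product of two bitstrings. -/
def dotp {p : ℕ} (a b : Fin p → ZMod 2) : ZMod 2 := ∑ i, a i * b i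

/-- The sign `(-1)^t` for `t : ZMod 2`. -/
noncomputable def sgn (t : ZMod 2) : ℂ := (-1 : ℂ) ^ t.val

/-- The Pauli spinor matrix `σ(a,b)`, representing `⊗ᵢ X^(a i) Z^(b i)`:
`σ(a,b) x y = (-1)^(b⬝x)` if `y = x + a` and `0` otherwise. -/
noncomputable def pauli {p : ℕ} (a b : Fin p → ZMod 2) :
    Matrix (Fin p → ZMod 2) (Fin p → ZMod 2) ℂ :=
  fun x y => if y = x + a then sgn (dotp b x) else 0

/-- The symplectic form `ω((a,b),(c,d)) = a⬝d + b⬝c` on pairs of bitstrings. -/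
def omegaF {p : ℕ} (u v : (Fin p → ZMod 2) × (Fin p → ZMod 2)) : ZMod 2 :=
  dotp u.1 v.2 + dotp u.2 v.1

/-- A subspace is isotropic if `ω` vanishes on all pairs of its elements. -/
def IsIsotropic {p : ℕ}
    (V : Submodule (ZMod 2) ((Fin p → ZMod 2) × (Fin p → ZMod 2))) : Prop :=
  ∀ u ∈ V, ∀ v ∈ V, omegaF u v = 0

/-- A maximal isotropic subspace: isotropic and not properly contained in any
isotropic subspace. -/
def IsMaxIsotropic {p : ℕ}
    (V : Submodule (ZMod 2) ((Fin p → ZMod 2) × (Fin p → ZMod 2))) : Prop :=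
  IsIsotropic V ∧ ∀ W, IsIsotropic W → V ≤ W → W = V

lemma zmod2_cases (t : ZMod 2) : t = 0 ∨ t = 1 := by revert t; decide

lemma sgn_zero : sgn (0 : ZMod 2) = 1 := rfl
lemma sgn_one : sgn (1 : ZMod 2) = -1 := by simp [sgn, ZMod.val_one]

lemma sgn_add (s t : ZMod 2) : sgn (s + t) = sgn s * sgn t := by
  rcases zmod2_cases s with hs | hs <;> rcases zmod2_cases t with ht | ht <;>
    subst hs <;> subst ht <;>
    simp only [show (1:ZMod 2)+1 = 0 from by decide, add_zero, zero_add,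
      sgn_zero, sgn_one] <;> norm_num


lemma sgn_mul_self (t : ZMod 2) : sgn t * sgn t = 1 := by
  rcases zmod2_cases t with h | h <;> subst h <;> norm_num [sgn_zero, sgn_one]

lemma sgn_conj (t : ZMod 2) : (starRingEnd ℂ) (sgn t) = sgn t := by
  rcases zmod2_cases t with h | h <;> subst h <;> simp [sgn_zero, sgn_one]

lemma dotp_comm {p : ℕ} (a b : Fin p → ZMod 2) : dotp a b = dotp b a := by
  simp [dotp, mul_comm]

lemma dotp_add_right {p : ℕ} (b x y : Fin p → ZMod 2) :
    dotp b (x + y) = dotp b x + dotp b y := by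
  simp [dotp, mul_add, Finset.sum_add_distrib]

lemma dotp_add_left {p : ℕ} (x y b : Fin p → ZMod 2) :
    dotp (x + y) b = dotp x b + dotp y b := by
  simp [dotp, add_mul, Finset.sum_add_distrib]

lemma dotp_smul_left {p : ℕ} (t : ZMod 2) (x b : Fin p → ZMod 2) :
    dotp (t • x) b = t * dotp x b := by
  simp [dotp, Finset.mul_sum, mul_assoc]
lemma pauli_mulVec {p : ℕ} (a b : Fin p → ZMod 2) (ψ : (Fin p → ZMod 2) → ℂ)
    (x : Fin p → ZMod 2) :
    (pauli a b).mulVec ψ x = sgn (dotp b x) * ψ (x + a) := by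
  simp [Matrix.mulVec, dotProduct, pauli]

lemma omegaF_add_left {p : ℕ} (u v w : (Fin p → ZMod 2) × (Fin p → ZMod 2)) :
    omegaF (u + v) w = omegaF u w + omegaF v w := by
  simp only [omegaF, Prod.fst_add, Prod.snd_add, dotp_add_left]; ring

lemma omegaF_smul_left {p : ℕ} (t : ZMod 2) (u w : (Fin p → ZMod 2) × (Fin p → ZMod 2)) :
    omegaF (t • u) w = t * omegaF u w := by
  simp only [omegaF, Prod.smul_fst, Prod.smul_snd, dotp_smul_left]; ring

lemma omegaF_comm {p : ℕ} (u v : (Fin p → ZMod 2) × (Fin p → ZMod 2)) :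
    omegaF u v = omegaF v u := by
  simp only [omegaF, dotp_comm]; ring

lemma omegaF_add_right {p : ℕ} (w u v : (Fin p → ZMod 2) × (Fin p → ZMod 2)) :
    omegaF w (u + v) = omegaF w u + omegaF w v := by
  rw [omegaF_comm w (u + v), omegaF_add_left, omegaF_comm u w, omegaF_comm v w]

lemma omegaF_smul_right {p : ℕ} (t : ZMod 2) (w u : (Fin p → ZMod 2) × (Fin p → ZMod 2)) :
    omegaF w (t • u) = t * omegaF w u := by
  rw [omegaF_comm w (t • u), omegaF_smul_left, omegaF_comm u w]

lemma omegaF_self {p : ℕ} (u : (Fin p → ZMod 2) × (Fin p → ZMod 2)) :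
    omegaF u u = 0 := by
  simp only [omegaF, dotp_comm u.2 u.1]
  rcases zmod2_cases (dotp u.1 u.2) with h | h <;> rw [h] <;> decide


/-- Paper's Lemma 4: For a stabilizer state `ψ₀` of a maximal isotropic
subspace `V`, the inner product `⟪ψ₀, σ(c,d).mulVec ψ₀⟫` vanishes iff `(c,d) ∉ V`:
the state `S ψ₀` is orthogonal to `ψ₀` iff the spinor `S` lies outside the Cartanion. -/
theorem inner_stabilizer_eq_zero_iff {p : ℕ} (hp : 1 ≤ p)
    (V : Submodule (ZMod 2) ((Fin p → ZMod 2) × (Fin p → ZMod 2)))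
    (hV : IsMaxIsotropic V) (ψ₀ : (Fin p → ZMod 2) → ℂ) (hψ₀ : ψ₀ ≠ 0)
    (hstab : ∀ u ∈ V, (pauli u.1 u.2).mulVec ψ₀ = ψ₀)
    (c d : Fin p → ZMod 2) :
    (∑ x, (starRingEnd ℂ) (ψ₀ x) * (pauli c d).mulVec ψ₀ x) = 0 ↔ (c, d) ∉ V := by
  constructor
  · -- if (c,d) ∈ V then the sum is ∑ ‖ψ₀ x‖² ≠ 0
    intro hI hmem
    rw [show (pauli c d).mulVec ψ₀ = ψ₀ from hstab (c, d) hmem] at hI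
    have h1 : ∀ x : Fin p → ZMod 2, (starRingEnd ℂ) (ψ₀ x) * ψ₀ x
        = (Complex.normSq (ψ₀ x) : ℂ) := fun x => by
      rw [mul_comm, Complex.mul_conj]
    rw [Finset.sum_congr rfl (fun x _ => h1 x), ← Complex.ofReal_sum] at hI
    have h2 : ∑ x : Fin p → ZMod 2, Complex.normSq (ψ₀ x) = 0 := by
      exact_mod_cast hI
    have h3 : ∀ x ∈ Finset.univ, Complex.normSq (ψ₀ x) = 0 := by
      rw [← Finset.sum_eq_zero_iff_of_nonneg (fun x _ => Complex.normSq_nonneg _)]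
      exact h2
    apply hψ₀
    funext x
    exact Complex.normSq_eq_zero.mp (h3 x (Finset.mem_univ x))
  · -- if (c,d) ∉ V then the sum vanishes
    intro hmem
    -- find u ∈ V with ω(u,(c,d)) = 1
    obtain ⟨⟨a, b⟩, hab, hω⟩ :
        ∃ u ∈ V, omegaF u (c, d) = 1 := by
      by_contra hno
      push_neg at hno
      have hall : ∀ u ∈ V, omegaF u (c, d) = 0 := fun u hu => by
        rcases zmod2_cases (omegaF u (c, d)) with h | h
        · exact h
        · exact absurd h (hno u hu)
      set W := V ⊔ Submodule.span (ZMod 2) {((c, d) : (Fin p → ZMod 2) × (Fin p → ZMod 2))} with hW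
      have hWiso : IsIsotropic W := by
        intro u hu v hv
        rw [Submodule.mem_sup] at hu hv
        obtain ⟨u₁, hu₁, u₂, hu₂, rfl⟩ := hu
        obtain ⟨v₁, hv₁, v₂, hv₂, rfl⟩ := hv
        rw [Submodule.mem_span_singleton] at hu₂ hv₂
        obtain ⟨s, rfl⟩ := hu₂
        obtain ⟨t, rfl⟩ := hv₂
        have h1 := hV.1 u₁ hu₁ v₁ hv₁
        have h2 := hall u₁ hu₁
        have h3 := hall v₁ hv₁
        have h4 : omegaF ((c, d)) v₁ = 0 := (omegaF_comm _ _).trans h3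
        have h5 : omegaF ((c, d)) u₁ = 0 := (omegaF_comm _ _).trans h2
        simp only [omegaF_add_left, omegaF_add_right, omegaF_smul_left,
          omegaF_smul_right, h1, h2, h3, h4, h5, omegaF_self,
          mul_zero, zero_mul, add_zero, zero_add]
      have := hV.2 W hWiso le_sup_left
      apply hmem
      rw [← this]
      exact Submodule.mem_sup_right (Submodule.mem_span_singleton_self _)
    -- stabilizer at (a,b)
    have hstab' : ∀ z, sgn (dotp b z) * ψ₀ (z + a) = ψ₀ z := fun z => by
      have := congrFun (hstab (a, b) hab) z
      rwa [pauli_mulVec] at this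
    set I := ∑ x, (starRingEnd ℂ) (ψ₀ x) * (pauli c d).mulVec ψ₀ x with hI
    have key : I = sgn (omegaF (a, b) (c, d)) * I := by
      calc I = ∑ x, sgn (omegaF (a, b) (c, d)) *
            ((starRingEnd ℂ) (ψ₀ (x + a)) * (pauli c d).mulVec ψ₀ (x + a)) := by
            apply Finset.sum_congr rfl
            intro x _
            rw [pauli_mulVec, pauli_mulVec, ← hstab' x, ← hstab' (x + c)]
            rw [RingHom.map_mul, sgn_conj]
            simp only [omegaF, dotp_add_right, sgn_add]
            rw [show x + c + a = x + a + c from by ring]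
            rw [dotp_comm d a]
            linear_combination
              (sgn (dotp b c) * sgn (dotp d x) * (starRingEnd ℂ) (ψ₀ (x + a)) *
                ψ₀ (x + a + c)) * sgn_mul_self (dotp b x) -
              (sgn (dotp b c) * sgn (dotp d x) * (starRingEnd ℂ) (ψ₀ (x + a)) *
                ψ₀ (x + a + c)) * sgn_mul_self (dotp a d)
        _ = sgn (omegaF (a, b) (c, d)) *
            ∑ x, (starRingEnd ℂ) (ψ₀ (x + a)) * (pauli c d).mulVec ψ₀ (x + a) := by
            rw [Finset.mul_sum]
        _ = sgn (omegaF (a, b) (c, d)) * I := by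
            congr 1
            exact Fintype.sum_equiv (Equiv.addRight a)
              (fun x => (starRingEnd ℂ) (ψ₀ (x + a)) * (pauli c d).mulVec ψ₀ (x + a))
              (fun x => (starRingEnd ℂ) (ψ₀ x) * (pauli c d).mulVec ψ₀ x)
              (fun x => rfl)
    rw [hω, sgn_one, neg_one_mul] at key
    have h2 : (2 : ℂ) * I = 0 := by linear_combination key
    rcases mul_eq_zero.mp h2 with h | h
    · norm_num at h
    · exact h
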